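/- Let V be a finite index set, 𝒳 = ∏_{i∈V} 𝒳_i a finite product space, and let P: 𝒳 → ℝ be strictly positive and factorize over a set of scopes S: P(x) = (1/Z) ∏_{I∈S} φ_I(x_I) with each factor φ_I strictly positive and Z > 0. Fix x* ∈ 𝒳 and define φ*_D(x) = exp(∑_{U⊆D} (−1)^{|D−U|} ln P(x_U, x*_{−U})). Then for every nonempty D ⊆ V that is not a subset of any scope I ∈ S, the canonical factor φ*_D is identically equal to 1. -/

import Mathlib

open scoped BigOperators

lemma alt_sum_powerset_zero {V : Type*} [DecidableEq V]
    (D : Finset V) (j : V) (hj : j ∈ D) (F : Finset V → ℝ)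
    (hF : ∀ U ⊆ D.erase j, F (insert j U) = F U) :
    ∑ U ∈ D.powerset, (-1 : ℝ) ^ (D \ U).card * F U = 0 := by
  have hjD' : j ∉ D.erase j := Finset.notMem_erase j D
  have hDins : D = insert j (D.erase j) := (Finset.insert_erase hj).symm
  rw [hDins, Finset.sum_powerset_insert hjD']
  have h1 : ∀ U ∈ (D.erase j).powerset,
      (-1 : ℝ) ^ ((insert j (D.erase j)) \ U).card * F U
        = -((-1 : ℝ) ^ ((D.erase j) \ U).card * F U) := by
    intro U hU
    rw [Finset.mem_powerset] at hU
    have hjU : j ∉ U := fun h => hjD' (hU h)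
    have : (insert j (D.erase j)) \ U = insert j ((D.erase j) \ U) := by
      rw [Finset.insert_sdiff_of_notMem _ hjU]
    rw [this, Finset.card_insert_of_notMem (fun h => hjD' (Finset.mem_sdiff.mp h).1)]
    ring
  have h2 : ∀ U ∈ (D.erase j).powerset,
      (-1 : ℝ) ^ ((insert j (D.erase j)) \ insert j U).card * F (insert j U)
        = (-1 : ℝ) ^ ((D.erase j) \ U).card * F U := by
    intro U hU
    rw [Finset.mem_powerset] at hU
    have : (insert j (D.erase j)) \ insert j U = (D.erase j) \ U := by
      ext a
      simp only [Finset.mem_sdiff, Finset.mem_insert]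
      constructor
      · rintro ⟨ha1 | ha1, ha2⟩
        · exact absurd (Or.inl ha1) ha2
        · exact ⟨ha1, fun h => ha2 (Or.inr h)⟩
      · rintro ⟨ha1, ha2⟩
        refine ⟨Or.inr ha1, ?_⟩
        rintro (rfl | h)
        · exact hjD' ha1
        · exact ha2 h
    rw [this, hF U hU]
  rw [Finset.sum_congr rfl h1, Finset.sum_congr rfl h2, Finset.sum_neg_distrib]
  ring

/-- If a strictly positive `P` factorizes over a set of scopes `S`,
`P(x) = (1/Z) ∏_{I ∈ S} φ_I(x_I)` with strictly positive factors `φ_I` each depending only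
on the coordinates in its scope `I`, then for every nonempty `D ⊆ V` that is not a subset
of any scope `I ∈ S`, the canonical factor
`φ*_D(x) = exp(∑_{U ⊆ D} (−1)^{|D − U|} ln P(x_U, x*_{−U}))` is identically 1. -/
theorem canonical_factor_trivial_outside_scopes
    {V : Type*} [Fintype V] [DecidableEq V]
    {𝒳 : V → Type*} [∀ i, Fintype (𝒳 i)]
    (P : (∀ i, 𝒳 i) → ℝ) (hP : ∀ x, 0 < P x)
    (S : Finset (Finset V)) (φ : Finset V → (∀ i, 𝒳 i) → ℝ) (Z : ℝ) (hZ : 0 < Z)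
    (hφpos : ∀ I ∈ S, ∀ x, 0 < φ I x)
    (hφdep : ∀ I ∈ S, ∀ x y : (∀ i, 𝒳 i), (∀ i ∈ I, x i = y i) → φ I x = φ I y)
    (hfact : ∀ x, P x = (1 / Z) * ∏ I ∈ S, φ I x)
    (xstar : ∀ i, 𝒳 i)
    (D : Finset V) (hD : D.Nonempty) (hDS : ∀ I ∈ S, ¬ D ⊆ I)
    (x : ∀ i, 𝒳 i) :
    Real.exp (∑ U ∈ D.powerset,
      (-1 : ℝ) ^ (D \ U).card
        * Real.log (P fun i => if i ∈ U then x i else xstar i)) = 1 := by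
  rw [Real.exp_eq_one_iff]
  -- expand log P
  have hlog : ∀ y : (∀ i, 𝒳 i), Real.log (P y)
      = Real.log (1 / Z) + ∑ I ∈ S, Real.log (φ I y) := by
    intro y
    rw [hfact y, Real.log_mul (by positivity)
      (ne_of_gt (Finset.prod_pos (fun I hI => hφpos I hI y))),
      Real.log_prod (fun I hI => ne_of_gt (hφpos I hI y))]
  calc ∑ U ∈ D.powerset, (-1 : ℝ) ^ (D \ U).card
        * Real.log (P fun i => if i ∈ U then x i else xstar i)
      = ∑ U ∈ D.powerset, ((-1 : ℝ) ^ (D \ U).card * Real.log (1 / Z)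
          + ∑ I ∈ S, (-1 : ℝ) ^ (D \ U).card
            * Real.log (φ I fun i => if i ∈ U then x i else xstar i)) := by
        refine Finset.sum_congr rfl fun U _ => ?_
        rw [hlog, mul_add, Finset.mul_sum]
    _ = (∑ U ∈ D.powerset, (-1 : ℝ) ^ (D \ U).card * Real.log (1 / Z))
          + ∑ I ∈ S, ∑ U ∈ D.powerset, (-1 : ℝ) ^ (D \ U).card
            * Real.log (φ I fun i => if i ∈ U then x i else xstar i) := by
        rw [Finset.sum_add_distrib, Finset.sum_comm]
    _ = 0 := by
        obtain ⟨j, hj⟩ := hD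
        rw [alt_sum_powerset_zero D j hj (fun _ => Real.log (1 / Z)) (fun U _ => rfl), zero_add]
        refine Finset.sum_eq_zero fun I hI => ?_
        obtain ⟨k, hkD, hkI⟩ := Finset.not_subset.mp (hDS I hI)
        refine alt_sum_powerset_zero D k hkD _ (fun U hU => ?_)
        congr 1
        refine hφdep I hI _ _ fun i hi => ?_
        have : i ≠ k := fun h => hkI (h ▸ hi)
        simp [Finset.mem_insert, this]
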